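/- Let 0 = a₀ < a₁ < … < a_m = 1 and let f : [0,1] → ℝ be a function that is constant on each open interval (a_{j−1}, a_j) for j = 1,…,m. Define s : [0,1] → ℝ by s(x) = 1 if x ∈ [a_{j−1}, (a_{j−1}+a_j)/2) for some j, and s(x) = −1 otherwise. Then ∫₀¹ f(x)·s(x) dx = 0. -/

import Mathlib

open MeasureTheory intervalIntegral Set in
open scoped Classical in
theorem stmt_11 (m : ℕ) (hm : 1 ≤ m) (a : ℕ → ℝ)
    (h0 : a 0 = 0) (h1 : a m = 1)
    (hmono : ∀ j < m, a j < a (j + 1))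
    (f : ℝ → ℝ)
    (hf : ∀ j < m, ∃ c : ℝ, ∀ x ∈ Set.Ioo (a j) (a (j + 1)), f x = c)
    (s : ℝ → ℝ)
    (hs : ∀ x : ℝ, s x =
      if ∃ j < m, a j ≤ x ∧ x < (a j + a (j + 1)) / 2 then (1 : ℝ) else -1) :
    ∫ x in (0 : ℝ)..1, f x * s x = 0 := by
  -- monotonicity of a on [0, m]
  have amono : ∀ j k, j ≤ k → k ≤ m → a j ≤ a k := by
    intro j k hjk hkm
    induction k with
    | zero => simp [Nat.le_zero.mp hjk]
    | succ n ih =>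
      rcases Nat.lt_or_ge j (n + 1) with h | h
      · exact le_trans (ih (Nat.lt_succ_iff.mp h) (by omega))
          (le_of_lt (hmono n (by omega)))
      · have : j = n + 1 := by omega
        simp [this]
  -- value of s on each half-interval
  have s1 : ∀ j < m, ∀ x ∈ Set.Ioo (a j) ((a j + a (j + 1)) / 2), s x = 1 := by
    intro j hj x hx
    rw [hs x, if_pos ⟨j, hj, le_of_lt hx.1, hx.2⟩]
  have s2 : ∀ j < m, ∀ x ∈ Set.Ioo ((a j + a (j + 1)) / 2) (a (j + 1)), s x = -1 := by
    intro j hj x hx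
    rw [hs x, if_neg]
    rintro ⟨j', hj', hle, hlt⟩
    rcases lt_trichotomy j' j with h | h | h
    · have h1 : a (j' + 1) ≤ a j := amono (j' + 1) j (by omega) (by omega)
      have h2 : (a j' + a (j' + 1)) / 2 ≤ a (j' + 1) := by
        have := hmono j' hj'; linarith
      have h3 : a j ≤ (a j + a (j + 1)) / 2 := by
        have := hmono j hj; linarith
      linarith [hx.1]
    · subst h; linarith [hx.1]
    · have h1 : a (j + 1) ≤ a j' := amono (j + 1) j' (by omega) (by omega)
      linarith [hx.2]
  have hb : ∀ b₀ : ℝ, ∀ᵐ x : ℝ ∂volume, x ≠ b₀ := by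
    intro b₀
    rw [MeasureTheory.ae_iff]
    simp [measure_singleton (α := ℝ) b₀]
  -- each piece integrates to zero
  have piece : ∀ j < m,
      IntervalIntegrable (fun x => f x * s x) volume (a j) (a (j + 1)) ∧
      ∫ x in (a j)..(a (j + 1)), f x * s x = 0 := by
    intro j hj
    obtain ⟨c, hc⟩ := hf j hj
    set b := (a j + a (j + 1)) / 2 with hbdef
    have hjj : a j < a (j + 1) := hmono j hj
    have hab : a j < b := by rw [hbdef]; linarith
    have hba : b < a (j + 1) := by rw [hbdef]; linarith
    -- first half: f x * s x = c a.e. on Ι (a j) b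
    have e1 : (fun x => f x * s x) =ᵐ[volume.restrict (Set.uIoc (a j) b)] fun _ => c := by
      refine (ae_restrict_iff' measurableSet_uIoc).mpr ?_
      filter_upwards [hb b] with x hx hmem
      rw [Set.uIoc_of_le (le_of_lt hab)] at hmem
      have hxo : x ∈ Set.Ioo (a j) b := ⟨hmem.1, lt_of_le_of_ne hmem.2 hx⟩
      rw [hc x ⟨hxo.1, lt_trans hxo.2 hba⟩, s1 j hj x hxo, mul_one]
    have e2 : (fun x => f x * s x) =ᵐ[volume.restrict (Set.uIoc b (a (j + 1)))] fun _ => -c := by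
      refine (ae_restrict_iff' measurableSet_uIoc).mpr ?_
      filter_upwards [hb (a (j + 1))] with x hx hmem
      rw [Set.uIoc_of_le (le_of_lt hba)] at hmem
      have hxo : x ∈ Set.Ioo b (a (j + 1)) :=
        ⟨hmem.1, lt_of_le_of_ne hmem.2 hx⟩
      rw [hc x ⟨lt_trans hab hxo.1, hxo.2⟩, s2 j hj x hxo, mul_neg_one]
    have i1 : IntervalIntegrable (fun x => f x * s x) volume (a j) b :=
      (_root_.intervalIntegrable_const (c := c)).congr_ae e1.symm
    have i2 : IntervalIntegrable (fun x => f x * s x) volume b (a (j + 1)) :=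
      (_root_.intervalIntegrable_const (c := -c)).congr_ae e2.symm
    refine ⟨i1.trans i2, ?_⟩
    rw [← intervalIntegral.integral_add_adjacent_intervals i1 i2]
    have v1 : ∫ x in (a j)..b, f x * s x = (b - a j) • c := by
      rw [intervalIntegral.integral_congr_ae ((ae_restrict_iff' measurableSet_uIoc).mp e1)]
      exact intervalIntegral.integral_const c
    have v2 : ∫ x in b..(a (j + 1)), f x * s x = (a (j + 1) - b) • (-c) := by
      rw [intervalIntegral.integral_congr_ae ((ae_restrict_iff' measurableSet_uIoc).mp e2)]
      exact intervalIntegral.integral_const (-c)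
    rw [v1, v2, smul_eq_mul, smul_eq_mul, hbdef]
    ring
  have hint : ∀ k < m, IntervalIntegrable (fun x => f x * s x) volume (a k) (a (k + 1)) :=
    fun k hk => (piece k hk).1
  have hsum := intervalIntegral.sum_integral_adjacent_intervals (μ := volume) hint
  rw [h0, h1] at hsum
  rw [← hsum]
  exact Finset.sum_eq_zero fun k hk => (piece k (Finset.mem_range.mp hk)).2
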